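/- Let L and c be positive integers and let δ be a real number with 0 ≤ δ ≤ 1/(2L). Then ∑_{k=−(c−1)}^{c−1} |F_L(k/L + δ)|² ≥ 1 − 1/c. -/

import Mathlib

/-- The averaged geometric phase sum `F_L(x) = (1/L) ∑_{j=0}^{L-1} exp(2πi x j)`. -/
noncomputable def avgPhaseSum (L : ℕ) (x : ℝ) : ℂ :=
  (L : ℂ)⁻¹ * ∑ j ∈ Finset.range L, Complex.exp (2 * Real.pi * Complex.I * x * j)

open Finset Complex

namespace APS

noncomputable def e (x : ℝ) : ℂ := Complex.exp (2 * Real.pi * Complex.I * x)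

lemma e_add (x y : ℝ) : e (x + y) = e x * e y := by
  rw [e, e, e, ← Complex.exp_add]; push_cast; ring_nf

lemma e_zero : e 0 = 1 := by simp [e]

lemma e_int (n : ℤ) : e n = 1 := by
  rw [e, show (2 * (Real.pi:ℂ) * Complex.I * ((n:ℤ):ℝ) : ℂ) = n * (2*(Real.pi:ℂ)*Complex.I) by push_cast; ring]
  exact Complex.exp_int_mul_two_pi_mul_I n

lemma e_conj (x : ℝ) : (starRingEnd ℂ) (e x) = e (-x) := by
  rw [e, e, ← Complex.exp_conj]
  have : (starRingEnd ℂ) (2 * (Real.pi:ℝ) * Complex.I * (x:ℝ)) =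
      2 * (Real.pi:ℝ) * Complex.I * ((-x : ℝ):ℂ) := by
    simp only [map_mul, Complex.conj_I, Complex.conj_ofReal, map_ofNat]
    push_cast; ring
  rw [this]

lemma e_pow (x : ℝ) (n : ℕ) : e x ^ n = e (n * x) := by
  rw [e, e, ← Complex.exp_nat_mul]
  congr 1
  push_cast; ring

lemma avg_eq (L : ℕ) (x : ℝ) :
    avgPhaseSum L x = (L : ℂ)⁻¹ * ∑ j ∈ Finset.range L, e (x * j) := by
  rw [avgPhaseSum]
  congr 1
  refine Finset.sum_congr rfl fun j _ => ?_
  rw [e]; congr 1; push_cast; ring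

lemma e_ne_one (L : ℕ) (m : ℤ) (hm : m ≠ 0) (hmL : m.natAbs < L) :
    e ((m : ℝ) / L) ≠ 1 := by
  intro h
  rw [e, Complex.exp_eq_one_iff] at h
  obtain ⟨n, hn⟩ := h
  have hLr : (L : ℝ) ≠ 0 := Nat.cast_ne_zero.mpr (by omega)
  have hI : (2 * (Real.pi:ℂ) * Complex.I) ≠ 0 := by
    simp [Real.pi_ne_zero, Complex.I_ne_zero]
  have h2 : (((m:ℝ)/L : ℝ) : ℂ) = (n : ℂ) := by
    have : 2 * (Real.pi:ℂ) * Complex.I * (((m:ℝ)/L : ℝ):ℂ) =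
        2 * (Real.pi:ℂ) * Complex.I * (n:ℂ) := by
      rw [hn]; push_cast; ring
    exact mul_left_cancel₀ hI this
  have h3 : (m:ℝ)/L = n := by exact_mod_cast h2
  have h4 : (m:ℝ) = n * L := by
    field_simp at h3; linarith [h3]
  have h5 : m = n * L := by exact_mod_cast h4
  rcases eq_or_ne n 0 with rfl | hn0
  · simp at h5; exact hm h5
  · have hna : (1:ℤ) ≤ |n| := Int.one_le_abs hn0
    have hLm : (L:ℤ) ≤ |m| := by
      rw [h5, abs_mul, abs_of_nonneg (by positivity : (0:ℤ) ≤ (L:ℤ))]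
      nlinarith [abs_nonneg n]
    rw [Int.abs_eq_natAbs] at hLm
    omega

lemma geom_zero (L : ℕ) (m : ℤ) (hm : m ≠ 0) (hmL : m.natAbs < L) (a : ℤ) :
    ∑ i ∈ Finset.range L, e (((a : ℝ) + i) * m / L) = 0 := by
  have hLr : (L : ℝ) ≠ 0 := Nat.cast_ne_zero.mpr (by omega)
  have hterm : ∀ i ∈ Finset.range L,
      e (((a : ℝ) + i) * m / L) = e ((a : ℝ) * m / L) * e ((m:ℝ)/L) ^ i := by
    intro i _
    rw [e_pow, ← e_add]
    congr 1
    field_simp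
  rw [Finset.sum_congr rfl hterm, ← Finset.mul_sum]
  have hr : e ((m:ℝ)/L) ≠ 1 := e_ne_one L m hm hmL
  rw [geom_sum_eq hr]
  have hrL : e ((m:ℝ)/L) ^ L = 1 := by
    rw [e_pow, show (L:ℝ) * ((m:ℝ)/L) = (m:ℝ) by field_simp]
    exact e_int m
  rw [hrL]
  simp

lemma zconj (L : ℕ) (x : ℝ) :
    avgPhaseSum L x * (starRingEnd ℂ) (avgPhaseSum L x)
      = (L:ℂ)⁻¹ * (L:ℂ)⁻¹ * ∑ j ∈ Finset.range L, ∑ j' ∈ Finset.range L, e (x * j - x * j') := by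
  rw [avg_eq, map_mul, map_sum, map_inv₀, Complex.conj_natCast]
  simp only [e_conj]
  rw [show ((L:ℂ)⁻¹ * ∑ j ∈ Finset.range L, e (x * j)) * ((L:ℂ)⁻¹ * ∑ j' ∈ Finset.range L, e (-(x * j')))
      = (L:ℂ)⁻¹ * (L:ℂ)⁻¹ * ((∑ j ∈ Finset.range L, e (x * j)) * ∑ j' ∈ Finset.range L, e (-(x * j'))) by ring]
  rw [Finset.sum_mul_sum]
  congr 1
  refine Finset.sum_congr rfl fun j _ => Finset.sum_congr rfl fun j' _ => ?_
  rw [sub_eq_add_neg, e_add]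

lemma full_period (L : ℕ) (hL : 0 < L) (δ : ℝ) (a : ℤ) :
    ∑ i ∈ Finset.range L, Complex.normSq (avgPhaseSum L (((a:ℝ) + i) / L + δ)) = 1 := by
  have hL0 : (L : ℂ) ≠ 0 := by exact_mod_cast hL.ne'
  have hLr : (L : ℝ) ≠ 0 := by exact_mod_cast hL.ne'
  have key : ∑ i ∈ Finset.range L,
      (avgPhaseSum L (((a:ℝ) + i) / L + δ) * (starRingEnd ℂ) (avgPhaseSum L (((a:ℝ) + i) / L + δ)))
      = 1 := by
    have step1 : ∀ i ∈ Finset.range L,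
        avgPhaseSum L (((a:ℝ) + i) / L + δ) * (starRingEnd ℂ) (avgPhaseSum L (((a:ℝ) + i) / L + δ))
        = (L:ℂ)⁻¹ * (L:ℂ)⁻¹ * ∑ j ∈ Finset.range L, ∑ j' ∈ Finset.range L,
            e (δ * ((j:ℝ) - j') + ((a:ℝ) + i) * ((j:ℝ) - j') / L) := by
      intro i _
      rw [zconj]
      congr 1
      refine Finset.sum_congr rfl fun j _ => Finset.sum_congr rfl fun j' _ => ?_
      congr 1
      field_simp
      ring
    rw [Finset.sum_congr rfl step1, ← Finset.mul_sum]
    have swap : ∑ i ∈ Finset.range L, ∑ j ∈ Finset.range L, ∑ j' ∈ Finset.range L,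
          e (δ * ((j:ℝ) - j') + ((a:ℝ) + i) * ((j:ℝ) - j') / L)
        = ∑ j ∈ Finset.range L, ∑ j' ∈ Finset.range L, ∑ i ∈ Finset.range L,
          e (δ * ((j:ℝ) - j') + ((a:ℝ) + i) * ((j:ℝ) - j') / L) := by
      rw [Finset.sum_comm]
      exact Finset.sum_congr rfl fun j _ => Finset.sum_comm
    rw [swap]
    have inner : ∀ j ∈ Finset.range L, ∀ j' ∈ Finset.range L,
        ∑ i ∈ Finset.range L, e (δ * ((j:ℝ) - j') + ((a:ℝ) + i) * ((j:ℝ) - j') / L)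
        = if j' = j then (L:ℂ) else 0 := by
      intro j hj j' hj'
      rcases eq_or_ne j' j with rfl | hne
      · simp only [if_pos rfl]
        have h1 : ∀ i ∈ Finset.range L,
            e (δ * ((j':ℝ) - j') + ((a:ℝ) + i) * ((j':ℝ) - j') / L) = 1 := by
          intro i _
          rw [show δ * ((j':ℝ) - j') + ((a:ℝ) + i) * ((j':ℝ) - j') / L = 0 by ring]
          exact e_zero
        rw [Finset.sum_congr rfl h1]
        simp
      · rw [if_neg hne]
        have hterm : ∀ i ∈ Finset.range L,
            e (δ * ((j:ℝ) - j') + ((a:ℝ) + i) * ((j:ℝ) - j') / L)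
            = e (δ * ((j:ℝ) - j')) * e (((a:ℝ) + i) * ((((j:ℤ) - (j':ℤ)):ℤ):ℝ) / L) := by
          intro i _
          rw [← e_add]
          congr 1
          push_cast
          ring
        rw [Finset.sum_congr rfl hterm, ← Finset.mul_sum]
        have hm : ((j:ℤ) - (j':ℤ)) ≠ 0 := by omega
        have hmL : ((j:ℤ) - (j':ℤ)).natAbs < L := by
          have := Finset.mem_range.mp hj
          have := Finset.mem_range.mp hj'
          omega
        rw [geom_zero L _ hm hmL a]
        simp
    have hfin : ∑ j ∈ Finset.range L, ∑ j' ∈ Finset.range L, ∑ i ∈ Finset.range L,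
          e (δ * ((j:ℝ) - j') + ((a:ℝ) + i) * ((j:ℝ) - j') / L)
        = ∑ _j ∈ Finset.range L, (L:ℂ) := by
      refine Finset.sum_congr rfl fun j hj => ?_
      rw [Finset.sum_congr rfl (fun j' hj' => inner j hj j' hj')]
      simp [hj]
    rw [hfin]
    rw [Finset.sum_const, Finset.card_range, nsmul_eq_mul]
    field_simp
  have h2 : ((∑ i ∈ Finset.range L, Complex.normSq (avgPhaseSum L (((a:ℝ) + i) / L + δ)) : ℝ) : ℂ) = 1 := by
    push_cast
    rw [← key]
    exact Finset.sum_congr rfl fun i _ => (Complex.mul_conj _).symm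
  exact_mod_cast h2

lemma normSq_e_sub_one (x : ℝ) :
    Complex.normSq (e x - 1) = 4 * Real.sin (Real.pi * x) ^ 2 := by
  have h : e x = ((Real.cos (2*(Real.pi*x)) : ℝ) : ℂ) + ((Real.sin (2*(Real.pi*x)) : ℝ) : ℂ) * Complex.I := by
    rw [e, show (2*(Real.pi:ℂ)*Complex.I*(x:ℝ)) = (((2*(Real.pi*x):ℝ)):ℂ) * Complex.I by push_cast; ring,
      Complex.exp_mul_I, ← Complex.ofReal_cos, ← Complex.ofReal_sin]
  rw [h, show (((Real.cos (2*(Real.pi*x)) : ℝ) : ℂ) + ((Real.sin (2*(Real.pi*x)) : ℝ) : ℂ) * Complex.I - 1)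
      = (((Real.cos (2*(Real.pi*x)) - 1 : ℝ)) : ℂ) + ((Real.sin (2*(Real.pi*x)) : ℝ) : ℂ) * Complex.I by
        push_cast; ring]
  rw [Complex.normSq_add_mul_I]
  have h1 := Real.sin_sq_add_cos_sq (2*(Real.pi*x))
  have h2 := Real.cos_two_mul (Real.pi*x)
  have h3 := Real.sin_sq_add_cos_sq (Real.pi*x)
  nlinarith

lemma normSq_avg_le (L : ℕ) (hL : 0 < L) (x : ℝ) (hs : Real.sin (Real.pi * x) ≠ 0) :
    Complex.normSq (avgPhaseSum L x) ≤ 1 / ((L:ℝ)^2 * Real.sin (Real.pi * x) ^ 2) := by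
  have hLr : (L : ℝ) ≠ 0 := by exact_mod_cast hL.ne'
  have hr1 : e x ≠ 1 := by
    intro h
    apply hs
    have : Complex.normSq (e x - 1) = 0 := by rw [h]; simp
    rw [normSq_e_sub_one] at this
    nlinarith [sq_nonneg (Real.sin (Real.pi * x))]
  have hsum : avgPhaseSum L x = (L:ℂ)⁻¹ * ((e x ^ L - 1) / (e x - 1)) := by
    rw [avg_eq]
    congr 1
    rw [← geom_sum_eq hr1]
    refine Finset.sum_congr rfl fun j _ => ?_
    rw [e_pow]
    congr 1
    ring
  have habs1 : ‖e x‖ = 1 := by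
    rw [e, Complex.norm_exp]
    norm_num [Complex.mul_re, Complex.I_re, Complex.I_im]
  have hnum : ‖e x ^ L - 1‖ ≤ 2 := by
    calc ‖e x ^ L - 1‖ = ‖e x ^ L + (-1)‖ := by rw [sub_eq_add_neg]
      _ ≤ ‖e x ^ L‖ + ‖(-1 : ℂ)‖ := norm_add_le _ _
      _ = 2 := by rw [norm_pow, habs1]; norm_num
  have hden : ‖e x - 1‖ ^ 2 = 4 * Real.sin (Real.pi * x) ^ 2 := by
    rw [Complex.sq_norm, normSq_e_sub_one]
  have hdpos : 0 < ‖e x - 1‖ := by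
    rw [norm_pos_iff]
    exact sub_ne_zero_of_ne hr1
  have habs : ‖avgPhaseSum L x‖ ≤ (L:ℝ)⁻¹ * (2 / ‖e x - 1‖) := by
    rw [hsum, norm_mul, norm_div, norm_inv]
    rw [Complex.norm_natCast]
    gcongr
  have hnn : (0:ℝ) ≤ ‖avgPhaseSum L x‖ := norm_nonneg _
  have hsq : ‖avgPhaseSum L x‖ ^ 2 ≤ ((L:ℝ)⁻¹ * (2 / ‖e x - 1‖)) ^ 2 := by
    exact pow_le_pow_left₀ hnn habs 2
  rw [← Complex.sq_norm]
  calc ‖avgPhaseSum L x‖ ^ 2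
      ≤ ((L:ℝ)⁻¹ * (2 / ‖e x - 1‖)) ^ 2 := hsq
    _ = 4 / ((L:ℝ)^2 * (‖e x - 1‖ ^ 2)) := by
        field_simp
        ring
    _ = 1 / ((L:ℝ)^2 * Real.sin (Real.pi * x) ^ 2) := by
        rw [hden]
        have : Real.sin (Real.pi * x) ^ 2 > 0 := by positivity
        field_simp

lemma jordan (t : ℝ) (h0 : 0 ≤ t) (h1 : t ≤ 1/2) : 2 * t ≤ Real.sin (Real.pi * t) := by
  have := Real.mul_le_sin (x := Real.pi * t) (by positivity)
    (by nlinarith [Real.pi_pos])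
  have hpi := Real.pi_pos
  calc 2 * t = 2 / Real.pi * (Real.pi * t) := by field_simp
    _ ≤ Real.sin (Real.pi * t) := this

lemma sum_shift {M : Type*} [AddCommMonoid M] (f : ℤ → M) (a : ℤ) (L : ℕ) :
    ∑ k ∈ Finset.Ico a (a + L), f k = ∑ i ∈ Finset.range L, f (a + i) := by
  refine Finset.sum_nbij' (fun k => (k - a).toNat) (fun i => a + i) ?_ ?_ ?_ ?_ ?_
  · intro k hk
    simp only [Finset.mem_Ico] at hk
    simp only [Finset.mem_range]
    omega
  · intro i hi
    simp only [Finset.mem_range] at hi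
    simp only [Finset.mem_Ico]
    omega
  · intro k hk
    simp only [Finset.mem_Ico] at hk
    omega
  · intro i hi
    simp only [Finset.mem_range] at hi
    omega
  · intro k hk
    simp only [Finset.mem_Ico] at hk
    congr 1
    omega

lemma tele (c : ℤ) (hc : 2 ≤ c) : ∀ n : ℤ, c - 1 ≤ n →
    ∑ k ∈ Finset.Icc c n, (1/((k:ℝ) - 1) - 1/(k:ℝ)) = 1/((c:ℝ) - 1) - 1/(n:ℝ) := by
  refine Int.le_induction ?_ ?_
  · rw [show Finset.Icc c (c-1) = ∅ by apply Finset.Icc_eq_empty; omega]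
    simp
  · intro n hn ih
    have hsplit : Finset.Icc c (n+1) = insert (n+1) (Finset.Icc c n) := by
      ext k
      simp only [Finset.mem_Icc, Finset.mem_insert]
      omega
    have hnotmem : (n+1) ∉ Finset.Icc c n := by
      simp only [Finset.mem_Icc]
      omega
    rw [hsplit, Finset.sum_insert hnotmem, ih]
    have h1 : ((n:ℝ)) ≠ 0 := by
      have h1a : (1:ℤ) ≤ n := by omega
      have h1b : (1:ℝ) ≤ (n:ℝ) := by exact_mod_cast h1a
      linarith
    push_cast
    have h2 : ((n:ℝ)+1) - 1 = (n:ℝ) := by ring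
    rw [h2]
    ring

set_option maxHeartbeats 1000000 in
lemma tail_term (L c : ℕ) (hc2 : 2 ≤ c) (hcL : 2*c ≤ L) (δ : ℝ) (hδ0 : 0 ≤ δ)
    (hδ1 : δ ≤ 1/(2*(L:ℝ))) (k : ℤ) (hk : (c:ℤ) ≤ k) (hk2 : k ≤ (L:ℤ) - c) :
    Complex.normSq (avgPhaseSum L ((k:ℝ)/L + δ))
      ≤ 1/(4*(k:ℝ)*((k:ℝ)-1)) + 1/(4*((L:ℝ)-k)*((L:ℝ)-k-1)) := by
  have hL : 0 < L := by omega
  have hLr : (0:ℝ) < L := by exact_mod_cast hL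
  have hkr : (2:ℝ) ≤ (k:ℝ) := by exact_mod_cast (show (2:ℤ) ≤ k by omega)
  have hmr : (2:ℝ) ≤ (L:ℝ) - k := by
    have h := (show ((2:ℤ):ℝ) ≤ (((L:ℤ) - k : ℤ) : ℝ) by exact_mod_cast (show (2:ℤ) ≤ (L:ℤ) - k by omega))
    push_cast at h
    linarith
  set x : ℝ := (k:ℝ)/L + δ with hx
  have hδL : δ * L ≤ 1/2 := by
    have h1 : δ * L ≤ (1/(2*(L:ℝ))) * L := by nlinarith
    have h2 : (1/(2*(L:ℝ))) * L = 1/2 := by field_simp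
    linarith
  have hxL : x * L = (k:ℝ) + δ * L := by
    rw [hx]; field_simp
  have hkxL : (k:ℝ) ≤ x * L := by nlinarith
  have hx0 : 0 < x := by nlinarith
  have hx1 : x < 1 := by nlinarith
  have t1nn : (0:ℝ) ≤ 1/(4*(k:ℝ)*((k:ℝ)-1)) := by
    have h1 : (0:ℝ) < (k:ℝ) - 1 := by linarith
    have h0 : (0:ℝ) < (k:ℝ) := by linarith
    positivity
  have t2nn : (0:ℝ) ≤ 1/(4*((L:ℝ)-k)*((L:ℝ)-k-1)) := by
    have h1 : (0:ℝ) < (L:ℝ)-k := by linarith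
    have h2 : (0:ℝ) < (L:ℝ)-k-1 := by linarith
    positivity
  by_cases hhalf : x ≤ 1/2
  · have hsin : 2*x ≤ Real.sin (Real.pi * x) := jordan x hx0.le hhalf
    have hspos : 0 < Real.sin (Real.pi * x) := by nlinarith
    have hb := normSq_avg_le L hL x hspos.ne'
    have h5 : 2*(k:ℝ) ≤ Real.sin (Real.pi * x) * L := by nlinarith
    have h6 : (2*(k:ℝ))^2 ≤ (Real.sin (Real.pi * x) * L)^2 :=
      pow_le_pow_left₀ (by linarith) h5 2
    have hden : 4*(k:ℝ)*((k:ℝ)-1) ≤ (L:ℝ)^2 * Real.sin (Real.pi * x)^2 := by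
      nlinarith [h6]
    have hpos : (0:ℝ) < 4*(k:ℝ)*((k:ℝ)-1) := by nlinarith
    have := one_div_le_one_div_of_le hpos hden
    calc Complex.normSq (avgPhaseSum L x) ≤ 1 / ((L:ℝ)^2 * Real.sin (Real.pi * x)^2) := hb
      _ ≤ 1/(4*(k:ℝ)*((k:ℝ)-1)) := this
      _ ≤ _ := by linarith
  · have h1x : 0 < 1 - x := by linarith
    have h1x2 : 1 - x ≤ 1/2 := by linarith
    have hsin' : 2*(1-x) ≤ Real.sin (Real.pi * (1-x)) := jordan (1-x) h1x.le h1x2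
    have heq : Real.sin (Real.pi * (1-x)) = Real.sin (Real.pi * x) := by
      rw [show Real.pi * (1-x) = Real.pi - Real.pi * x by ring, Real.sin_pi_sub]
    rw [heq] at hsin'
    have hspos : 0 < Real.sin (Real.pi * x) := by nlinarith
    have hb := normSq_avg_le L hL x hspos.ne'
    have h5 : 2*((L:ℝ)-k) - 1 ≤ Real.sin (Real.pi * x) * L := by nlinarith
    have h6 : (2*((L:ℝ)-k) - 1)^2 ≤ (Real.sin (Real.pi * x) * L)^2 :=
      pow_le_pow_left₀ (by linarith) h5 2
    have hden : 4*((L:ℝ)-k)*((L:ℝ)-k-1) ≤ (L:ℝ)^2 * Real.sin (Real.pi * x)^2 := by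
      nlinarith [h6]
    have hpos : (0:ℝ) < 4*((L:ℝ)-k)*((L:ℝ)-k-1) := by nlinarith
    have := one_div_le_one_div_of_le hpos hden
    calc Complex.normSq (avgPhaseSum L x) ≤ 1 / ((L:ℝ)^2 * Real.sin (Real.pi * x)^2) := hb
      _ ≤ 1/(4*((L:ℝ)-k)*((L:ℝ)-k-1)) := this
      _ ≤ _ := by linarith

lemma reflect (a b : ℤ) (f : ℤ → ℝ) :
    ∑ k ∈ Finset.Icc a b, f (a + b - k) = ∑ k ∈ Finset.Icc a b, f k := by
  refine Finset.sum_nbij' (fun k => a + b - k) (fun k => a + b - k) ?_ ?_ ?_ ?_ ?_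
  · intro k hk; simp only [Finset.mem_Icc] at *; omega
  · intro k hk; simp only [Finset.mem_Icc] at *; omega
  · intro k _; omega
  · intro k _; omega
  · intro k _; dsimp only

lemma sq_abs' (z : ℂ) : (‖z‖) ^ 2 = Complex.normSq z := Complex.sq_norm z

end APS

/-- Almost-identity property: for positive integers `L, c` and `0 ≤ δ ≤ 1/(2L)`,
`∑_{k=-(c-1)}^{c-1} |F_L(k/L + δ)|² ≥ 1 − 1/c`. -/
theorem sum_abs_avgPhaseSum_sq_ge (L c : ℕ) (hL : 0 < L) (hc : 0 < c)
    (δ : ℝ) (hδ0 : 0 ≤ δ) (hδ1 : δ ≤ 1 / (2 * L)) :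
    1 - 1 / (c : ℝ) ≤
      ∑ k ∈ Finset.Icc (-(c : ℤ) + 1) ((c : ℤ) - 1),
        (‖avgPhaseSum L ((k : ℝ) / L + δ)‖) ^ 2 := by
  have hcr : (0:ℝ) < c := by exact_mod_cast hc
  have hδ1' : δ ≤ 1 / (2 * (L:ℝ)) := by exact_mod_cast hδ1
  simp only [APS.sq_abs']
  have hgnn : ∀ k : ℤ, 0 ≤ Complex.normSq (avgPhaseSum L ((k:ℝ)/L + δ)) :=
    fun k => Complex.normSq_nonneg _
  have hfull : ∀ a : ℤ, ∑ k ∈ Finset.Ico a (a + L),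
      Complex.normSq (avgPhaseSum L ((k:ℝ)/L + δ)) = 1 := by
    intro a
    rw [APS.sum_shift (fun k => Complex.normSq (avgPhaseSum L ((k:ℝ)/L + δ))) a L,
      ← APS.full_period L hL δ a]
    refine Finset.sum_congr rfl fun i _ => ?_
    congr 2
    push_cast
    ring
  rcases eq_or_ne c 1 with rfl | hc1
  · have : Finset.Icc (-(1:ℤ) + 1) ((1:ℤ) - 1) = {0} := by decide
    rw [show ((1:ℕ):ℤ) = (1:ℤ) by norm_num, this, Finset.sum_singleton]
    have := hgnn 0
    norm_num at this ⊢
    exact this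
  · have hc2 : 2 ≤ c := by omega
    have hcr2 : (2:ℝ) ≤ (c:ℝ) := by exact_mod_cast hc2
    by_cases hLc : L ≤ 2*c - 1
    · have hsub : Finset.Ico (-(c:ℤ)+1) (-(c:ℤ)+1 + L) ⊆ Finset.Icc (-(c:ℤ)+1) ((c:ℤ)-1) := by
        intro k hk
        simp only [Finset.mem_Ico] at hk
        simp only [Finset.mem_Icc]
        omega
      have h1 := hfull (-(c:ℤ)+1)
      have h2 := Finset.sum_le_sum_of_subset_of_nonneg hsub (fun k _ _ => hgnn k)
      rw [h1] at h2
      have h3 : (0:ℝ) ≤ 1/(c:ℝ) := by positivity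
      linarith
    · have hL2c : 2*c ≤ L := by omega
      have hfull' := hfull (-(c:ℤ)+1)
      rw [show Finset.Ico (-(c:ℤ)+1) (-(c:ℤ)+1 + L)
            = Finset.Ico (-(c:ℤ)+1) (c:ℤ) ∪ Finset.Ico (c:ℤ) (-(c:ℤ)+1 + L) from
          (Finset.Ico_union_Ico_eq_Ico (by omega) (by omega)).symm,
        Finset.sum_union (Finset.Ico_disjoint_Ico_consecutive _ _ _)] at hfull'
      have hIcc1 : Finset.Ico (-(c:ℤ)+1) (c:ℤ) = Finset.Icc (-(c:ℤ)+1) ((c:ℤ)-1) := by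
        ext k; simp only [Finset.mem_Ico, Finset.mem_Icc]; omega
      have hIcc2 : Finset.Ico (c:ℤ) (-(c:ℤ)+1 + L) = Finset.Icc (c:ℤ) ((L:ℤ)-c) := by
        ext k; simp only [Finset.mem_Ico, Finset.mem_Icc]; omega
      rw [hIcc1, hIcc2] at hfull'
      have hw : (0:ℝ) < (c:ℝ) - 1 := by linarith
      have htel : ∑ k ∈ Finset.Icc (c:ℤ) ((L:ℤ)-c), 1/(4*(k:ℝ)*((k:ℝ)-1))
          ≤ 1/(4*((c:ℝ)-1)) := by
        have hterm : ∀ k ∈ Finset.Icc (c:ℤ) ((L:ℤ)-c),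
            1/(4*(k:ℝ)*((k:ℝ)-1)) = (1/4)*(1/((k:ℝ)-1) - 1/(k:ℝ)) := by
          intro k hk
          simp only [Finset.mem_Icc] at hk
          have hk2 : (2:ℝ) ≤ (k:ℝ) := by exact_mod_cast (show (2:ℤ) ≤ k by omega)
          have h1 : ((k:ℝ)) ≠ 0 := by linarith
          have h2 : ((k:ℝ)) - 1 ≠ 0 := by linarith
          field_simp
          ring
        rw [Finset.sum_congr rfl hterm, ← Finset.mul_sum]
        have hteleq := APS.tele (c:ℤ) (by exact_mod_cast hc2) ((L:ℤ)-c) (by omega)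
        rw [hteleq]
        have hLc2 : (0:ℝ) < ((L:ℤ)-(c:ℕ) : ℤ) := by
          exact_mod_cast (show (0:ℤ) < (L:ℤ)-c by omega)
        have h4 : (0:ℝ) ≤ 1/(((L:ℤ)-(c:ℕ) : ℤ):ℝ) := by positivity
        have h5 : ((c:ℤ):ℝ) = (c:ℝ) := by push_cast; ring
        rw [h5]
        have h6 : (0:ℝ) < 1/((c:ℝ)-1) := by positivity
        calc (1/4) * (1/((c:ℝ)-1) - 1/(((L:ℤ)-(c:ℕ) : ℤ):ℝ))
            ≤ (1/4) * (1/((c:ℝ)-1)) := by nlinarith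
          _ = 1/(4*((c:ℝ)-1)) := by field_simp
      have hrefl : ∑ k ∈ Finset.Icc (c:ℤ) ((L:ℤ)-c), 1/(4*((L:ℝ)-k)*((L:ℝ)-k-1))
          = ∑ k ∈ Finset.Icc (c:ℤ) ((L:ℤ)-c), 1/(4*(k:ℝ)*((k:ℝ)-1)) := by
        rw [← APS.reflect (c:ℤ) ((L:ℤ)-c) (fun k => 1/(4*(k:ℝ)*((k:ℝ)-1)))]
        refine Finset.sum_congr rfl fun k _ => ?_
        have : (((c:ℤ) + ((L:ℤ)-c) - k : ℤ) : ℝ) = (L:ℝ) - k := by push_cast; ring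
        rw [this]
      have htail : ∑ k ∈ Finset.Icc (c:ℤ) ((L:ℤ)-c),
          Complex.normSq (avgPhaseSum L ((k:ℝ)/L + δ)) ≤ 1/(c:ℝ) := by
        have hbd : ∀ k ∈ Finset.Icc (c:ℤ) ((L:ℤ)-c),
            Complex.normSq (avgPhaseSum L ((k:ℝ)/L + δ))
              ≤ 1/(4*(k:ℝ)*((k:ℝ)-1)) + 1/(4*((L:ℝ)-k)*((L:ℝ)-k-1)) := by
          intro k hk
          simp only [Finset.mem_Icc] at hk
          exact APS.tail_term L c hc2 hL2c δ hδ0 hδ1' k hk.1 hk.2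
        calc ∑ k ∈ Finset.Icc (c:ℤ) ((L:ℤ)-c), Complex.normSq (avgPhaseSum L ((k:ℝ)/L + δ))
            ≤ ∑ k ∈ Finset.Icc (c:ℤ) ((L:ℤ)-c),
                (1/(4*(k:ℝ)*((k:ℝ)-1)) + 1/(4*((L:ℝ)-k)*((L:ℝ)-k-1))) :=
              Finset.sum_le_sum hbd
          _ = (∑ k ∈ Finset.Icc (c:ℤ) ((L:ℤ)-c), 1/(4*(k:ℝ)*((k:ℝ)-1)))
              + ∑ k ∈ Finset.Icc (c:ℤ) ((L:ℤ)-c), 1/(4*((L:ℝ)-k)*((L:ℝ)-k-1)) :=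
              Finset.sum_add_distrib
          _ ≤ 1/(4*((c:ℝ)-1)) + 1/(4*((c:ℝ)-1)) := by rw [hrefl]; linarith
          _ = 1/(2*((c:ℝ)-1)) := by field_simp; ring
          _ ≤ 1/(c:ℝ) := by
              apply one_div_le_one_div_of_le hcr
              linarith
      linarith
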